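/- Let p, q : [0,1] → [1,∞] be measurable with p ≤ q a.e. on [0,1]. If f : I → X is Stepanov q(x)-almost periodic, then f is Stepanov p(x)-almost periodic, i.e., APS^{q(x)}(I:X) ↪ APS^{p(x)}(I:X). -/

import Mathlib

open MeasureTheory Set ENNReal Real
noncomputable section

/-- The Young-type function `φ_{p}(t)`: `t^p` for `p < ∞`, and `0` for `t ≤ 1`, `∞` for `t > 1`
when `p = ∞`. -/
def phiVar (p : ℝ≥0∞) (t : ℝ) : ℝ≥0∞ :=
  if p = ⊤ then (if t ≤ 1 then 0 else ⊤) else ENNReal.ofReal (t ^ p.toReal)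

/-- The modular `ρ(g) = ∫_Ω φ_{p(x)}(g(x)) dx` of a nonnegative function `g`. -/
def rhoVar (p : ℝ → ℝ≥0∞) (Ω : Set ℝ) (g : ℝ → ℝ) : ℝ≥0∞ :=
  ∫⁻ x in Ω, phiVar (p x) (g x)

/-- The Luxemburg norm of `f` on `Ω` with variable exponent `p`. -/
def luxNorm {X : Type*} [NormedAddCommGroup X] (p : ℝ → ℝ≥0∞) (Ω : Set ℝ) (f : ℝ → X) : ℝ :=
  sInf {lam : ℝ | 0 < lam ∧ rhoVar p Ω (fun x => ‖f x‖ / lam) ≤ 1}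

/-- Membership in the variable-exponent Lebesgue space `L^{p(x)}(Ω : X)`. -/
def MemLvar {X : Type*} [NormedAddCommGroup X] (p : ℝ → ℝ≥0∞) (Ω : Set ℝ) (f : ℝ → X) : Prop :=
  AEStronglyMeasurable f (volume.restrict Ω) ∧
    ∃ lam > 0, rhoVar p Ω (fun x => lam * ‖f x‖) < ⊤

/-- Stepanov `p(x)`-boundedness: all translates lie in `L^{p(x)}([0,1]:X)` with uniformly
bounded Luxemburg norms. -/
def StepanovBounded {X : Type*} [NormedAddCommGroup X] (p : ℝ → ℝ≥0∞) (I : Set ℝ)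
    (f : ℝ → X) : Prop :=
  (∀ t ∈ I, MemLvar p (Icc 0 1) (fun s => f (t + s))) ∧
    ∃ C : ℝ, ∀ t ∈ I, luxNorm p (Icc 0 1) (fun s => f (t + s)) ≤ C

/-- The Stepanov `p(x)`-norm `sup_{t ∈ I} ‖f(t+·)‖_{L^{p(x)}[0,1]}`. -/
def stepNorm {X : Type*} [NormedAddCommGroup X] (p : ℝ → ℝ≥0∞) (I : Set ℝ) (f : ℝ → X) : ℝ :=
  sSup ((fun t => luxNorm p (Icc 0 1) (fun s => f (t + s))) '' I)

/-- `S` is relatively dense in `I`: there is `l > 0` such that every subinterval of `I` of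
length `l` meets `S`. -/
def RelDenseIn (I S : Set ℝ) : Prop :=
  ∃ l > 0, ∀ a : ℝ, Icc a (a + l) ⊆ I → (S ∩ Icc a (a + l)).Nonempty

/-- Bohr almost periodicity of `f : I → X`. -/
def AlmostPeriodicOn {X : Type*} [NormedAddCommGroup X] (I : Set ℝ) (f : ℝ → X) : Prop :=
  ContinuousOn f I ∧
    ∀ ε > 0, RelDenseIn I {τ | 0 < τ ∧ ∀ t ∈ I, ‖f (t + τ) - f t‖ ≤ ε}

/-- Stepanov `p(x)`-almost periodicity: the map `t ↦ f(t+·)` into `L^{p(x)}([0,1]:X)` is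
well defined, continuous and almost periodic. -/
def StepanovAP {X : Type*} [NormedAddCommGroup X] (p : ℝ → ℝ≥0∞) (I : Set ℝ) (f : ℝ → X) : Prop :=
  (∀ t ∈ I, MemLvar p (Icc 0 1) (fun s => f (t + s))) ∧
  (∀ t ∈ I, ∀ ε > 0, ∃ δ > 0, ∀ t' ∈ I, |t' - t| < δ →
      luxNorm p (Icc 0 1) (fun s => f (t' + s) - f (t + s)) ≤ ε) ∧
  (∀ ε > 0, RelDenseIn I
      {τ | 0 < τ ∧ ∀ t ∈ I, luxNorm p (Icc 0 1) (fun s => f (t + τ + s) - f (t + s)) ≤ ε})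

-- auxiliary lemmas

lemma phiVar_mono {p : ℝ≥0∞} {t t' : ℝ} (ht : 0 ≤ t) (h : t ≤ t') :
    phiVar p t ≤ phiVar p t' := by
  unfold phiVar
  by_cases hp : p = ⊤
  · simp only [hp, if_true]
    by_cases h2 : t' ≤ 1
    · rw [if_pos (h.trans h2), if_pos h2]
    · rw [if_neg h2]; exact le_top
  · simp only [hp, if_false]
    exact ENNReal.ofReal_le_ofReal (Real.rpow_le_rpow ht h ENNReal.toReal_nonneg)

lemma phiVar_div {p : ℝ≥0∞} (hp1 : 1 ≤ p) {t r : ℝ} (ht : 0 ≤ t) (hr : 1 ≤ r) :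
    phiVar p (t / r) ≤ phiVar p t / ENNReal.ofReal r := by
  have hr0 : (0:ℝ) < r := lt_of_lt_of_le one_pos hr
  unfold phiVar
  by_cases hp : p = ⊤
  · simp only [hp, if_true]
    by_cases h2 : t / r ≤ 1
    · rw [if_pos h2]; exact zero_le
    · have ht1 : ¬ t ≤ 1 := by
        intro h
        exact h2 (by rw [div_le_one hr0]; linarith)
      rw [if_neg h2, if_neg ht1, ENNReal.top_div]
      simp [ENNReal.ofReal_ne_top]
  · have he1 : 1 ≤ p.toReal := by
      rw [← ENNReal.toReal_one]
      exact ENNReal.toReal_mono hp hp1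
    have hre : r ≤ r ^ p.toReal := by
      calc r = r ^ (1:ℝ) := (Real.rpow_one r).symm
        _ ≤ r ^ p.toReal := Real.rpow_le_rpow_of_exponent_le hr he1
    simp only [hp, if_false]
    calc ENNReal.ofReal ((t / r) ^ p.toReal)
        = ENNReal.ofReal (t ^ p.toReal / r ^ p.toReal) := by
          rw [Real.div_rpow ht hr0.le]
      _ ≤ ENNReal.ofReal (t ^ p.toReal / r) := by
          apply ENNReal.ofReal_le_ofReal
          apply div_le_div_of_nonneg_left (Real.rpow_nonneg ht _) hr0 hre
      _ = ENNReal.ofReal (t ^ p.toReal) / ENNReal.ofReal r :=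
          ENNReal.ofReal_div_of_pos hr0

lemma phiVar_le_add_one {p q : ℝ≥0∞} (hpq : p ≤ q) {t : ℝ} (ht : 0 ≤ t) :
    phiVar p t ≤ phiVar q t + 1 := by
  by_cases h1 : t ≤ 1
  · have hle1 : phiVar p t ≤ 1 := by
      unfold phiVar
      by_cases hp : p = ⊤
      · simp [hp, h1]
      · simp only [hp, if_false]
        exact ENNReal.ofReal_le_one.mpr (Real.rpow_le_one ht h1 ENNReal.toReal_nonneg)
    exact le_trans hle1 le_add_self
  · push_neg at h1
    by_cases hq : q = ⊤
    · unfold phiVar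
      rw [if_pos hq, if_neg (not_le.mpr h1)]
      exact le_top
    · have hp : p ≠ ⊤ := fun h => hq (top_le_iff.mp (h ▸ hpq))
      have : phiVar p t ≤ phiVar q t := by
        unfold phiVar
        rw [if_neg hp, if_neg hq]
        exact ENNReal.ofReal_le_ofReal
          (Real.rpow_le_rpow_of_exponent_le h1.le (ENNReal.toReal_mono hq hpq))
      exact le_trans this le_self_add

lemma measurable_phiVar : Measurable fun pt : ℝ≥0∞ × ℝ => phiVar pt.1 pt.2 := by
  unfold phiVar
  refine Measurable.ite ?_ ?_ ?_
  · exact measurable_fst (measurableSet_singleton ⊤)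
  · exact Measurable.ite (measurable_snd measurableSet_Iic) measurable_const measurable_const
  · exact ENNReal.measurable_ofReal.comp (measurable_snd.pow measurable_fst.ennreal_toReal)

lemma volume_Icc01 : volume (Icc (0:ℝ) 1) = 1 := by
  rw [Real.volume_Icc]; norm_num

lemma rho_le_rho_add_one (p q : ℝ → ℝ≥0∞)
    (hpq : ∀ᵐ x ∂(volume.restrict (Icc (0:ℝ) 1)), p x ≤ q x)
    (g : ℝ → ℝ) (hg : ∀ x, 0 ≤ g x) :
    rhoVar p (Icc 0 1) g ≤ rhoVar q (Icc 0 1) g + 1 := by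
  unfold rhoVar
  calc ∫⁻ x in Icc (0:ℝ) 1, phiVar (p x) (g x)
      ≤ ∫⁻ x in Icc (0:ℝ) 1, (phiVar (q x) (g x) + 1) :=
        lintegral_mono_ae (hpq.mono fun x hx => phiVar_le_add_one hx (hg x))
    _ = (∫⁻ x in Icc (0:ℝ) 1, phiVar (q x) (g x)) + ∫⁻ _ in Icc (0:ℝ) 1, (1:ℝ≥0∞) :=
        lintegral_add_right _ measurable_const
    _ = (∫⁻ x in Icc (0:ℝ) 1, phiVar (q x) (g x)) + 1 := by
        rw [setLIntegral_const, one_mul, volume_Icc01]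

lemma rho_div_le (p : ℝ → ℝ≥0∞) (hp1 : ∀ x, 1 ≤ p x) (Ω : Set ℝ)
    (g : ℝ → ℝ) (hg : ∀ x, 0 ≤ g x) {r : ℝ} (hr : 1 ≤ r) :
    rhoVar p Ω (fun x => g x / r) ≤ rhoVar p Ω g / ENNReal.ofReal r := by
  have hr0 : (0:ℝ) < r := lt_of_lt_of_le one_pos hr
  have hne : (ENNReal.ofReal r)⁻¹ ≠ ⊤ :=
    ENNReal.inv_ne_top.mpr (ENNReal.ofReal_pos.mpr hr0).ne'
  unfold rhoVar
  calc ∫⁻ x in Ω, phiVar (p x) (g x / r)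
      ≤ ∫⁻ x in Ω, phiVar (p x) (g x) / ENNReal.ofReal r :=
        lintegral_mono fun x => phiVar_div (hp1 x) (hg x) hr
    _ = (∫⁻ x in Ω, phiVar (p x) (g x)) / ENNReal.ofReal r := by
        simp_rw [div_eq_mul_inv]
        exact lintegral_mul_const' _ _ hne

lemma qset_nonempty {X : Type*} [NormedAddCommGroup X] (q : ℝ → ℝ≥0∞)
    (hq1 : ∀ x, 1 ≤ q x) (g : ℝ → X)
    (h : ∃ lam > 0, rhoVar q (Icc 0 1) (fun x => lam * ‖g x‖) < ⊤) :
    {lam : ℝ | 0 < lam ∧ rhoVar q (Icc 0 1) (fun x => ‖g x‖ / lam) ≤ 1}.Nonempty := by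
  obtain ⟨l0, hl0, hM⟩ := h
  set M := rhoVar q (Icc 0 1) (fun x => l0 * ‖g x‖) with hMdef
  have hMt : (0:ℝ) ≤ M.toReal := ENNReal.toReal_nonneg
  set r : ℝ := M.toReal + 1 with hrdef
  have hr1 : 1 ≤ r := by linarith
  refine ⟨r / l0, div_pos (by linarith) hl0, ?_⟩
  have heq : (fun x => ‖g x‖ / (r / l0)) = fun x => (l0 * ‖g x‖) / r := by
    funext x
    rw [div_div_eq_mul_div, mul_comm]
  rw [heq]
  calc rhoVar q (Icc 0 1) (fun x => (l0 * ‖g x‖) / r)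
      ≤ M / ENNReal.ofReal r :=
        rho_div_le q hq1 _ _ (fun x => by positivity) hr1
    _ ≤ 1 := by
        apply ENNReal.div_le_of_le_mul
        rw [one_mul, ← ENNReal.ofReal_toReal hM.ne]
        exact ENNReal.ofReal_le_ofReal (by linarith)

lemma lux_le_two_mul {X : Type*} [NormedAddCommGroup X] (p q : ℝ → ℝ≥0∞)
    (hp1 : ∀ x, 1 ≤ p x)
    (hpq : ∀ᵐ x ∂(volume.restrict (Icc (0:ℝ) 1)), p x ≤ q x)
    (g : ℝ → X)
    (hS : {lam : ℝ | 0 < lam ∧ rhoVar q (Icc 0 1) (fun x => ‖g x‖ / lam) ≤ 1}.Nonempty) :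
    luxNorm p (Icc 0 1) g ≤ 2 * luxNorm q (Icc 0 1) g := by
  have key : ∀ lam : ℝ, 0 < lam → rhoVar q (Icc 0 1) (fun x => ‖g x‖ / lam) ≤ 1 →
      0 < 2 * lam ∧ rhoVar p (Icc 0 1) (fun x => ‖g x‖ / (2 * lam)) ≤ 1 := by
    intro lam hl hρ
    refine ⟨by linarith, ?_⟩
    have heq : (fun x => ‖g x‖ / (2 * lam)) = fun x => (‖g x‖ / lam) / 2 := by
      funext x
      rw [div_div, mul_comm]
    rw [heq]
    calc rhoVar p (Icc 0 1) (fun x => (‖g x‖ / lam) / 2)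
        ≤ rhoVar p (Icc 0 1) (fun x => ‖g x‖ / lam) / ENNReal.ofReal 2 :=
          rho_div_le p hp1 _ _ (fun x => by positivity) one_le_two
      _ ≤ (rhoVar q (Icc 0 1) (fun x => ‖g x‖ / lam) + 1) / ENNReal.ofReal 2 :=
          ENNReal.div_le_div_right
            (rho_le_rho_add_one p q hpq _ (fun x => by positivity)) _
      _ ≤ (1 + 1) / ENNReal.ofReal 2 :=
          ENNReal.div_le_div_right (add_le_add hρ le_rfl) _
      _ = 1 := by
          rw [ENNReal.ofReal_ofNat]
          norm_num
          exact ENNReal.div_self (by norm_num) (by norm_num)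
  have hPbd : BddBelow {lam : ℝ | 0 < lam ∧ rhoVar p (Icc 0 1) (fun x => ‖g x‖ / lam) ≤ 1} :=
    ⟨0, fun x hx => hx.1.le⟩
  have h2 : luxNorm p (Icc 0 1) g / 2 ≤ luxNorm q (Icc 0 1) g := by
    unfold luxNorm
    refine le_csInf hS fun lam hlam => ?_
    have hmem := key lam hlam.1 hlam.2
    have := csInf_le hPbd hmem
    linarith
  linarith

lemma memLvar_of_le {X : Type*} [NormedAddCommGroup X] (p q : ℝ → ℝ≥0∞)
    (hpq : ∀ᵐ x ∂(volume.restrict (Icc (0:ℝ) 1)), p x ≤ q x)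
    (g : ℝ → X) (h : MemLvar q (Icc 0 1) g) : MemLvar p (Icc 0 1) g := by
  obtain ⟨hm, l, hl, hfin⟩ := h
  refine ⟨hm, l, hl, ?_⟩
  calc rhoVar p (Icc 0 1) (fun x => l * ‖g x‖)
      ≤ rhoVar q (Icc 0 1) (fun x => l * ‖g x‖) + 1 :=
        rho_le_rho_add_one p q hpq _ (fun x => by positivity)
    _ < ⊤ := ENNReal.add_lt_top.mpr ⟨hfin, ENNReal.one_lt_top⟩

lemma memLvar_sub {X : Type*} [NormedAddCommGroup X] (q : ℝ → ℝ≥0∞) (hqm : Measurable q)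
    (g1 g2 : ℝ → X) (h1 : MemLvar q (Icc 0 1) g1) (h2 : MemLvar q (Icc 0 1) g2) :
    MemLvar q (Icc 0 1) (fun x => g1 x - g2 x) := by
  obtain ⟨hm1, l1, hl1, hf1⟩ := h1
  obtain ⟨hm2, l2, hl2, hf2⟩ := h2
  refine ⟨hm1.sub hm2, min l1 l2 / 2, by positivity, ?_⟩
  have hpt : ∀ x, phiVar (q x) (min l1 l2 / 2 * ‖g1 x - g2 x‖) ≤
      phiVar (q x) (l1 * ‖g1 x‖) + phiVar (q x) (l2 * ‖g2 x‖) := by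
    intro x
    have h3 : ‖g1 x - g2 x‖ ≤ ‖g1 x‖ + ‖g2 x‖ := norm_sub_le _ _
    have hn1 : (0:ℝ) ≤ ‖g1 x‖ := norm_nonneg _
    have hn2 : (0:ℝ) ≤ ‖g2 x‖ := norm_nonneg _
    have hb : min l1 l2 / 2 * ‖g1 x - g2 x‖ ≤ max (l1 * ‖g1 x‖) (l2 * ‖g2 x‖) := by
      have e1 := mul_le_mul_of_nonneg_right (min_le_left l1 l2) hn1
      have e2 := mul_le_mul_of_nonneg_right (min_le_right l1 l2) hn2
      have e3 : min l1 l2 / 2 * ‖g1 x - g2 x‖ ≤ min l1 l2 / 2 * (‖g1 x‖ + ‖g2 x‖) := by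
        apply mul_le_mul_of_nonneg_left h3 (by positivity)
      have e4 := le_max_left (l1 * ‖g1 x‖) (l2 * ‖g2 x‖)
      have e5 := le_max_right (l1 * ‖g1 x‖) (l2 * ‖g2 x‖)
      nlinarith
    refine le_trans (phiVar_mono (by positivity) hb) ?_
    rcases le_total (l1 * ‖g1 x‖) (l2 * ‖g2 x‖) with h | h
    · rw [max_eq_right h]; exact le_add_self
    · rw [max_eq_left h]; exact le_self_add
  have hmeas1 : AEMeasurable (fun x => phiVar (q x) (l1 * ‖g1 x‖))
      (volume.restrict (Icc (0:ℝ) 1)) :=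
    measurable_phiVar.comp_aemeasurable
      (hqm.aemeasurable.prodMk (hm1.norm.aemeasurable.const_mul l1))
  calc rhoVar q (Icc 0 1) (fun x => min l1 l2 / 2 * ‖g1 x - g2 x‖)
      ≤ ∫⁻ x in Icc (0:ℝ) 1, (phiVar (q x) (l1 * ‖g1 x‖) + phiVar (q x) (l2 * ‖g2 x‖)) :=
        lintegral_mono fun x => hpt x
    _ = (∫⁻ x in Icc (0:ℝ) 1, phiVar (q x) (l1 * ‖g1 x‖)) +
        ∫⁻ x in Icc (0:ℝ) 1, phiVar (q x) (l2 * ‖g2 x‖) :=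
        lintegral_add_left' hmeas1 _
    _ < ⊤ := ENNReal.add_lt_top.mpr ⟨hf1, hf2⟩

theorem stmt12 {X : Type*} [NormedAddCommGroup X]
    (I : Set ℝ) (hI : I = univ ∨ I = Ici 0)
    (p q : ℝ → ℝ≥0∞) (hpm : Measurable p) (hqm : Measurable q)
    (hp1 : ∀ x, 1 ≤ p x) (hq1 : ∀ x, 1 ≤ q x)
    (hpq : ∀ᵐ x ∂(volume.restrict (Icc (0:ℝ) 1)), p x ≤ q x)
    (f : ℝ → X) (hf : StepanovAP q I f) :
    StepanovAP p I f := by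
  
  obtain ⟨hmem, hcont, hap⟩ := hf
  have hIt : ∀ t ∈ I, ∀ τ : ℝ, 0 < τ → t + τ ∈ I := by
    rcases hI with h | h <;> subst h
    · intro t _ τ _; trivial
    · intro t ht τ hτ
      rw [mem_Ici] at ht ⊢
      linarith
  have key : ∀ t₁ ∈ I, ∀ t₂ ∈ I, ∀ ε : ℝ, 0 < ε →
      luxNorm q (Icc 0 1) (fun s => f (t₁ + s) - f (t₂ + s)) ≤ ε / 2 →
      luxNorm p (Icc 0 1) (fun s => f (t₁ + s) - f (t₂ + s)) ≤ ε := by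
    intro t₁ h₁ t₂ h₂ ε hε hle
    have hsub := memLvar_sub q hqm _ _ (hmem t₁ h₁) (hmem t₂ h₂)
    have hne := qset_nonempty q hq1 _ hsub.2
    calc luxNorm p (Icc 0 1) (fun s => f (t₁ + s) - f (t₂ + s))
        ≤ 2 * luxNorm q (Icc 0 1) (fun s => f (t₁ + s) - f (t₂ + s)) :=
          lux_le_two_mul p q hp1 hpq _ hne
      _ ≤ 2 * (ε / 2) := by linarith
      _ = ε := by ring
  refine ⟨fun t ht => memLvar_of_le p q hpq _ (hmem t ht), ?_, ?_⟩
  · intro t ht ε hε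
    obtain ⟨δ, hδ, h⟩ := hcont t ht (ε / 2) (by linarith)
    exact ⟨δ, hδ, fun t' ht' hlt => key t' ht' t ht ε hε (h t' ht' hlt)⟩
  · intro ε hε
    obtain ⟨l, hl, hrel⟩ := hap (ε / 2) (by linarith)
    refine ⟨l, hl, fun a ha => ?_⟩
    obtain ⟨τ, hτS, hτI⟩ := hrel a ha
    exact ⟨τ, ⟨hτS.1, fun t ht => key (t + τ) (hIt t ht τ hτS.1) t ht ε hε (hτS.2 t ht)⟩, hτI⟩
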